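/- Let x, y ∈ ℂ be distinct with |y| ≠ 1. The minimum over the unit circle of f(a) = |x−a|/|y−a| equals ||x−y| − |xȳ−1|| / ||y|² − 1|. -/

import Mathlib

open Complex

lemma mrc_aux (x y : ℂ) (hy : ‖y‖ ≠ 1) (w : ℂ) (hw : ‖w‖ = 1)
    (hval : ‖(x * (starRingEnd ℂ) y - 1) + w * (x - y)‖ =
      |‖x - y‖ - ‖x * (starRingEnd ℂ) y - 1‖|) :
    ∃ a : ℂ, ‖a‖ = 1 ∧
      |‖x - y‖ - ‖x * (starRingEnd ℂ) y - 1‖| /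
        |‖y‖ ^ 2 - 1| = ‖x - a‖ / ‖y - a‖ := by
  have hy2 : |‖y‖ ^ 2 - 1| ≠ 0 := by
    rw [abs_ne_zero]
    intro h
    apply hy
    have h1 : (‖y‖ - 1) * (‖y‖ + 1) = 0 := by nlinarith
    rcases mul_eq_zero.1 h1 with h2 | h2
    · linarith
    · linarith [norm_nonneg y]
  have hwy : w + (starRingEnd ℂ) y ≠ 0 := by
    intro h
    apply hy
    have hc : (starRingEnd ℂ) y = -w := by linear_combination h
    have h2 : ‖(starRingEnd ℂ) y‖ = ‖-w‖ := by rw [hc]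
    simpa [Complex.norm_conj, hw] using h2
  set a : ℂ := (w * y + 1) / (w + (starRingEnd ℂ) y) with ha_def
  have hnw : Complex.normSq w = 1 := by rw [← Complex.sq_norm, hw]; norm_num
  have hww : w * (starRingEnd ℂ) w = 1 := by rw [Complex.mul_conj, hnw]; norm_num
  have habs_num : ‖w * y + 1‖ = ‖w + (starRingEnd ℂ) y‖ := by
    have h1 : w * y + 1 = w * (y + (starRingEnd ℂ) w) := by rw [mul_add, hww]
    rw [h1, norm_mul, hw, one_mul]
    rw [← Complex.norm_conj (y + (starRingEnd ℂ) w)]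
    simp [map_add, add_comm]
  have ht : ‖w + (starRingEnd ℂ) y‖ ≠ 0 := norm_ne_zero_iff.2 hwy
  have ha1 : ‖a‖ = 1 := by
    rw [ha_def, norm_div, habs_num, div_self ht]
  have hya : y - a = (y * (starRingEnd ℂ) y - 1) / (w + (starRingEnd ℂ) y) := by
    rw [ha_def]
    field_simp
    ring
  have hxa : x - a = ((x * (starRingEnd ℂ) y - 1) + w * (x - y)) / (w + (starRingEnd ℂ) y) := by
    rw [ha_def]
    field_simp
    ring
  have hKabs : ‖y * (starRingEnd ℂ) y - 1‖ = |‖y‖ ^ 2 - 1| := by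
    have hr : y * (starRingEnd ℂ) y - 1 = ((‖y‖ ^ 2 - 1 : ℝ) : ℂ) := by
      rw [Complex.mul_conj, ← Complex.sq_norm]; push_cast; ring
    rw [hr, Complex.norm_real, Real.norm_eq_abs]
  refine ⟨a, ha1, ?_⟩
  rw [hxa, hya, norm_div, norm_div, hval, hKabs]
  rw [div_div_div_cancel_right₀]
  exact ht

/-- The minimum of |x-a|/|y-a| over the unit circle equals ||x-y| - |x ȳ - 1|| / ||y|² - 1|. -/
theorem min_ratio_on_circle (x y : ℂ) (hxy : x ≠ y) (hy : ‖y‖ ≠ 1) :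
    IsLeast {r : ℝ | ∃ a : ℂ, ‖a‖ = 1 ∧
        r = ‖x - a‖ / ‖y - a‖}
      (|‖x - y‖ - ‖x * (starRingEnd ℂ) y - 1‖| /
        |‖y‖ ^ 2 - 1|) := by
  have hy2 : 0 < |‖y‖ ^ 2 - 1| := by
    rw [abs_pos]
    intro h
    apply hy
    have h1 : (‖y‖ - 1) * (‖y‖ + 1) = 0 := by nlinarith
    rcases mul_eq_zero.1 h1 with h2 | h2
    · linarith
    · linarith [norm_nonneg y]
  have hxy' : x - y ≠ 0 := sub_ne_zero.2 hxy
  constructor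
  · -- membership: pick the optimal a
    by_cases hB0 : x * (starRingEnd ℂ) y - 1 = 0
    · obtain ⟨a, ha1, heq⟩ := mrc_aux x y hy 1 (by simp) (by
        rw [hB0]
        simp [norm_nonneg])
      exact ⟨a, ha1, heq⟩
    · set A : ℝ := ‖x - y‖ with hA
      set B : ℝ := ‖x * (starRingEnd ℂ) y - 1‖ with hB
      have hApos : 0 < A := norm_pos_iff.2 hxy'
      have hBpos : 0 < B := norm_pos_iff.2 hB0
      set w : ℂ := -((A : ℂ) * (x * (starRingEnd ℂ) y - 1)) / ((x - y) * (B : ℂ)) with hw_def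
      have hBC : (B : ℂ) ≠ 0 := by exact_mod_cast hBpos.ne'
      have hw1 : ‖w‖ = 1 := by
        rw [hw_def, norm_div, norm_neg, norm_mul, norm_mul, Complex.norm_real,
          Complex.norm_real, Real.norm_eq_abs, Real.norm_eq_abs, ← hA, ← hB, abs_of_pos hApos, abs_of_pos hBpos]
        field_simp
      have hexpr : (x * (starRingEnd ℂ) y - 1) + w * (x - y)
          = (x * (starRingEnd ℂ) y - 1) * (((B - A : ℝ) : ℂ) / (B : ℂ)) := by
        rw [hw_def]
        field_simp
        push_cast
        ring
      have hval : ‖(x * (starRingEnd ℂ) y - 1) + w * (x - y)‖ = |A - B| := by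
        rw [hexpr, norm_mul, norm_div, Complex.norm_real, Complex.norm_real, Real.norm_eq_abs, Real.norm_eq_abs, ← hB,
          abs_of_pos hBpos]
        rw [abs_sub_comm A B]
        field_simp
      obtain ⟨a, ha1, heq⟩ := mrc_aux x y hy w hw1 hval
      exact ⟨a, ha1, heq⟩
  · -- lower bound
    rintro r ⟨a, ha1, rfl⟩
    have hya : y - a ≠ 0 := by
      intro h
      apply hy
      rw [sub_eq_zero.1 h, ha1]
    have hyapos : 0 < ‖y - a‖ := norm_pos_iff.2 hya
    rw [div_le_div_iff₀ hy2 hyapos]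
    have hna : Complex.normSq a = 1 := by rw [← Complex.sq_norm, ha1]; norm_num
    have hE2 : ‖a * (starRingEnd ℂ) y - 1‖ = ‖y - a‖ := by
      have h1 : a * (starRingEnd ℂ) (y - a) = a * (starRingEnd ℂ) y - 1 := by
        rw [map_sub, mul_sub, Complex.mul_conj, hna]
        norm_num
      rw [← h1, norm_mul, ha1, one_mul, Complex.norm_conj]
    have hKabs : ‖y * (starRingEnd ℂ) y - 1‖ = |‖y‖ ^ 2 - 1| := by
      have hr : y * (starRingEnd ℂ) y - 1 = ((‖y‖ ^ 2 - 1 : ℝ) : ℂ) := by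
        rw [Complex.mul_conj, ← Complex.sq_norm]; push_cast; ring
      rw [hr, Complex.norm_real, Real.norm_eq_abs]
    have hE1 : (y * (starRingEnd ℂ) y - 1) * (x - a)
        = (x * (starRingEnd ℂ) y - 1) * (y - a) + (x - y) * (a * (starRingEnd ℂ) y - 1) := by
      ring
    have tri : |‖(x * (starRingEnd ℂ) y - 1) * (y - a)‖
          - ‖(x - y) * (a * (starRingEnd ℂ) y - 1)‖|
        ≤ ‖(y * (starRingEnd ℂ) y - 1) * (x - a)‖ := by
      rw [hE1]
      have := abs_norm_sub_norm_le ((x * (starRingEnd ℂ) y - 1) * (y - a))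
        (-((x - y) * (a * (starRingEnd ℂ) y - 1)))
      simpa [sub_neg_eq_add] using this
    rw [norm_mul, norm_mul, norm_mul, hE2, hKabs] at tri
    have habs : |‖x * (starRingEnd ℂ) y - 1‖ * ‖y - a‖
          - ‖x - y‖ * ‖y - a‖|
        = |‖x - y‖ - ‖x * (starRingEnd ℂ) y - 1‖|
          * ‖y - a‖ := by
      rw [← sub_mul, abs_mul, abs_of_pos hyapos, abs_sub_comm]
    rw [habs] at tri
    linarith [tri]
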